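/- Define q_n for 0 < λ ≤ log 2 by q_0 = 1 and q_n = (e^{−λ(n+1)}/n) Σ_{k=1}^n q_{k−1} q_{n−k}, and m_n = exp(−λ(n⌈log₂ n⌉ + n − 2^⌈log₂ n⌉)) with m_0 = 1. Then m_n ≥ q_n for all n ≥ 0. -/

import Mathlib

open Real Finset

/-- Reindex a sum over `Icc 1 n` as a sum over `range n`. -/
lemma sum_Icc_one_eq_range {M : Type*} [AddCommMonoid M] (n : ℕ) (f : ℕ → M) :
    ∑ k ∈ Finset.Icc 1 n, f k = ∑ i ∈ Finset.range n, f (i + 1) := by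
  rw [← Finset.Ico_add_one_right_eq_Icc, Finset.sum_Ico_eq_sum_range]
  simp [add_comm]

/-- The sum of ceil-logs identity: `∑_{k=1}^n ⌈log₂ k⌉ = n⌈log₂ n⌉ - 2^⌈log₂ n⌉ + 1`. -/
lemma sum_clog (n : ℕ) :
    (∑ k ∈ Finset.Icc 1 n, (Nat.clog 2 k : ℤ)) =
      n * Nat.clog 2 n - 2 ^ Nat.clog 2 n + 1 := by
  induction n with
  | zero => simp
  | succ n ih =>
    rw [Finset.sum_Icc_succ_top (Nat.le_add_left 1 n), ih]
    by_cases h : n + 1 ≤ 2 ^ Nat.clog 2 n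
    · have hc : Nat.clog 2 (n + 1) = Nat.clog 2 n :=
        le_antisymm ((Nat.clog_le_iff_le_pow one_lt_two).mpr h)
          (Nat.clog_mono_right _ (Nat.le_succ n))
      rw [hc]; push_cast; ring
    · have hn : n = 2 ^ Nat.clog 2 n :=
        le_antisymm (Nat.le_pow_clog one_lt_two n) (by omega)
      have h1 : Nat.clog 2 n < Nat.clog 2 (n + 1) :=
        (Nat.lt_clog_iff_pow_lt one_lt_two).mpr (by omega)
      have h2 : Nat.clog 2 (n + 1) ≤ Nat.clog 2 n + 1 := by
        refine (Nat.clog_le_iff_le_pow one_lt_two).mpr ?_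
        have : 1 ≤ 2 ^ Nat.clog 2 n := Nat.one_le_two_pow
        calc n + 1 = 2 ^ Nat.clog 2 n + 1 := by omega
          _ ≤ 2 ^ (Nat.clog 2 n + 1) := by rw [pow_succ]; omega
      have hc : Nat.clog 2 (n + 1) = Nat.clog 2 n + 1 := by omega
      have hnz : (n : ℤ) = 2 ^ Nat.clog 2 n := by exact_mod_cast hn
      rw [hc]; push_cast; rw [pow_succ]; linarith [hnz]

/-- `⌈log₂ k⌉ ≤ log k / log 2 + 1` for `k ≥ 1`. -/
lemma clog_le_log (k : ℕ) (hk : 1 ≤ k) :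
    (Nat.clog 2 k : ℝ) ≤ Real.log k / Real.log 2 + 1 := by
  have hL : 0 < Real.log 2 := Real.log_pos one_lt_two
  rcases eq_or_lt_of_le hk with h1 | h2
  · simp [← h1]
  · have hk2 : 1 < k := h2
    have hcpos : 0 < Nat.clog 2 k := Nat.clog_pos one_lt_two hk2
    have hlt : 2 ^ (Nat.clog 2 k - 1) < k := Nat.pow_pred_clog_lt_self one_lt_two hk2
    have hltR : ((2:ℝ)) ^ (Nat.clog 2 k - 1) < (k : ℝ) := by exact_mod_cast hlt
    have hlog : ((Nat.clog 2 k - 1 : ℕ) : ℝ) * Real.log 2 < Real.log k := by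
      rw [← Real.log_pow]
      exact Real.log_lt_log (by positivity) hltR
    have hcast : ((Nat.clog 2 k - 1 : ℕ) : ℝ) = (Nat.clog 2 k : ℝ) - 1 := by
      have h : (1 : ℕ) ≤ Nat.clog 2 k := hcpos
      push_cast [h]
      ring
    rw [hcast] at hlog
    have hdiv : (Nat.clog 2 k : ℝ) - 1 ≤ Real.log k / Real.log 2 := by
      rw [le_div_iff₀ hL]; linarith
    linarith

/-- `log (n!) = ∑_{k=1}^n log k`. -/
lemma log_factorial (n : ℕ) :
    Real.log (n.factorial : ℝ) = ∑ k ∈ Finset.Icc 1 n, Real.log k := by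
  induction n with
  | zero => simp
  | succ n ih =>
    rw [Finset.sum_Icc_succ_top (Nat.le_add_left 1 n), ← ih, Nat.factorial_succ]
    push_cast
    rw [Real.log_mul (by positivity) (by positivity : (n.factorial : ℝ) ≠ 0)]
    ring

/-- Concavity (power-mean) inequality: `∑ x_k^α ≤ n^(1-α) (∑ x_k)^α`. -/
lemma sum_rpow_le (n : ℕ) (hn : 1 ≤ n) (α : ℝ) (hα0 : 0 < α) (hα1 : α ≤ 1)
    (x : ℕ → ℝ) (hx : ∀ k ∈ Finset.Icc 1 n, 0 ≤ x k) :
    ∑ k ∈ Finset.Icc 1 n, x k ^ α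
      ≤ (n : ℝ) ^ (1 - α) * (∑ k ∈ Finset.Icc 1 n, x k) ^ α := by
  have hn0 : (0:ℝ) < n := by exact_mod_cast hn
  have hcard : ((Finset.Icc 1 n).card : ℝ) = n := by simp
  have hw : ∀ k ∈ Finset.Icc 1 n, (0:ℝ) ≤ (n:ℝ)⁻¹ := fun _ _ => by positivity
  have hw' : ∑ _k ∈ Finset.Icc 1 n, (n:ℝ)⁻¹ = 1 := by
    rw [Finset.sum_const, nsmul_eq_mul, hcard, mul_inv_cancel₀ hn0.ne']
  have hz : ∀ k ∈ Finset.Icc 1 n, (0:ℝ) ≤ x k ^ α := fun k hk => Real.rpow_nonneg (hx k hk) α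
  have hp : (1:ℝ) ≤ 1 / α := by
    rw [le_div_iff₀ hα0]; linarith
  have key := Real.arith_mean_le_rpow_mean (Finset.Icc 1 n)
    (fun _ => (n:ℝ)⁻¹) (fun k => x k ^ α) hw hw' hz hp
  have hsimp : ∀ k ∈ Finset.Icc 1 n, (x k ^ α) ^ (1/α : ℝ) = x k := by
    intro k hk
    rw [← Real.rpow_mul (hx k hk), mul_one_div, div_self hα0.ne', Real.rpow_one]
  have hxs : 0 ≤ ∑ k ∈ Finset.Icc 1 n, x k := Finset.sum_nonneg hx
  have key2 : (n:ℝ)⁻¹ * ∑ k ∈ Finset.Icc 1 n, x k ^ α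
      ≤ ((n:ℝ)⁻¹ * ∑ k ∈ Finset.Icc 1 n, x k) ^ α := by
    refine le_trans (le_of_eq ?_) (le_trans key (le_of_eq ?_))
    · rw [Finset.mul_sum]
    · rw [one_div_one_div]
      congr 1
      rw [Finset.mul_sum]
      exact Finset.sum_congr rfl fun k hk => by rw [hsimp k hk]
  calc ∑ k ∈ Finset.Icc 1 n, x k ^ α
      = (n:ℝ) * ((n:ℝ)⁻¹ * ∑ k ∈ Finset.Icc 1 n, x k ^ α) := by
        rw [← mul_assoc, mul_inv_cancel₀ hn0.ne', one_mul]
    _ ≤ (n:ℝ) * (((n:ℝ)⁻¹ * ∑ k ∈ Finset.Icc 1 n, x k) ^ α) :=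
        mul_le_mul_of_nonneg_left key2 hn0.le
    _ = (n : ℝ) ^ (1 - α) * (∑ k ∈ Finset.Icc 1 n, x k) ^ α := by
        rw [Real.mul_rpow (by positivity) hxs, Real.inv_rpow hn0.le,
          Real.rpow_sub hn0, Real.rpow_one, div_eq_mul_inv]
        ring

/-- Sum of binomial coefficients over `Icc 1 n`. -/
lemma sum_choose_Icc (n : ℕ) (hn : 1 ≤ n) :
    ∑ k ∈ Finset.Icc 1 n, ((n - 1).choose (k - 1) : ℝ) = ((2 : ℝ)) ^ (n - 1 : ℕ) := by
  rw [sum_Icc_one_eq_range]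
  simp only [Nat.add_sub_cancel]
  rw [← Nat.cast_sum]
  norm_cast
  nth_rewrite 1 [show n = n - 1 + 1 from by omega]
  exact Nat.sum_range_choose (n - 1)

/-- The combined quicksort bound. -/
noncomputable def B (lam α : ℝ) (j : ℕ) : ℝ :=
  Real.exp (-(2 * lam) * j) * (j.factorial : ℝ) ^ (-α)

lemma B_pos (lam α : ℝ) (j : ℕ) : 0 < B lam α j :=
  mul_pos (Real.exp_pos _)
    (Real.rpow_pos_of_pos (by exact_mod_cast j.factorial_pos) _)

lemma B_mul (lam α : ℝ) (n k : ℕ) (hk1 : 1 ≤ k) (hkn : k ≤ n) :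
    B lam α (k - 1) * B lam α (n - k)
      = Real.exp (-(2 * lam) * ((n : ℝ) - 1)) * ((n - 1).factorial : ℝ) ^ (-α)
          * (((n - 1).choose (k - 1) : ℝ)) ^ α := by
  have hC : (n - 1).choose (k - 1) * ((k - 1).factorial * (n - k).factorial)
      = (n - 1).factorial := by
    have h := Nat.choose_mul_factorial_mul_factorial (show k - 1 ≤ n - 1 by omega)
    rw [show n - 1 - (k - 1) = n - k from by omega] at h
    rw [← h]; ring
  have hCR : (0 : ℝ) < ((n - 1).choose (k - 1) : ℝ) := by
    exact_mod_cast Nat.choose_pos (show k - 1 ≤ n - 1 by omega)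
  have hF1 : (0 : ℝ) < ((k - 1).factorial : ℝ) := by exact_mod_cast (k - 1).factorial_pos
  have hF2 : (0 : ℝ) < ((n - k).factorial : ℝ) := by exact_mod_cast (n - k).factorial_pos
  have hexp : Real.exp (-(2 * lam) * ((k - 1 : ℕ) : ℝ)) *
      Real.exp (-(2 * lam) * ((n - k : ℕ) : ℝ))
      = Real.exp (-(2 * lam) * ((n : ℝ) - 1)) := by
    rw [← Real.exp_add]
    congr 1
    have hcast : ((k - 1 : ℕ) : ℝ) + ((n - k : ℕ) : ℝ) = (n : ℝ) - 1 := by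
      push_cast [hk1, hkn]
      ring
    linear_combination (-(2 * lam)) * hcast
  have hrpow : ((k - 1).factorial : ℝ) ^ (-α) * ((n - k).factorial : ℝ) ^ (-α)
      = ((n - 1).factorial : ℝ) ^ (-α) * (((n - 1).choose (k - 1) : ℝ)) ^ α := by
    rw [← Real.mul_rpow hF1.le hF2.le]
    have hdiv : ((k - 1).factorial : ℝ) * ((n - k).factorial : ℝ)
        = ((n - 1).factorial : ℝ) / ((n - 1).choose (k - 1) : ℝ) := by
      rw [eq_div_iff hCR.ne']
      have : ((k - 1).factorial * (n - k).factorial) * ((n - 1).choose (k - 1))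
          = (n - 1).factorial := by rw [← hC]; ring
      exact_mod_cast this
    rw [hdiv, Real.div_rpow (by positivity) hCR.le]
    rw [Real.rpow_neg hCR.le]
    rw [div_inv_eq_mul]
  have hsplit : B lam α (k - 1) * B lam α (n - k)
      = (Real.exp (-(2 * lam) * ((k - 1 : ℕ) : ℝ)) *
          Real.exp (-(2 * lam) * ((n - k : ℕ) : ℝ))) *
        (((k - 1).factorial : ℝ) ^ (-α) * ((n - k).factorial : ℝ) ^ (-α)) := by
    simp only [B]; ring
  rw [hsplit, hexp, hrpow]; ring

lemma B_final (lam α : ℝ) (hL2 : α * Real.log 2 = lam) (n : ℕ) (hn : 1 ≤ n) :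
    Real.exp (-lam * (n + 1)) / n *
      (Real.exp (-(2 * lam) * ((n : ℝ) - 1)) * ((n - 1).factorial : ℝ) ^ (-α)
        * ((n : ℝ) ^ (1 - α) * ((2 : ℝ) ^ (n - 1 : ℕ)) ^ α)) = B lam α n := by
  have hn0 : (0 : ℝ) < n := by exact_mod_cast hn
  have hF' : (0 : ℝ) < ((n - 1).factorial : ℝ) := by exact_mod_cast (n - 1).factorial_pos
  have hF : (0 : ℝ) < (n.factorial : ℝ) := by exact_mod_cast n.factorial_pos
  have hp2 : (0 : ℝ) < (2 : ℝ) ^ (n - 1 : ℕ) := by positivity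
  have hcast : ((n - 1 : ℕ) : ℝ) = (n : ℝ) - 1 := by push_cast [hn]; ring
  have ha : ((2 : ℝ) ^ (n - 1 : ℕ)) ^ α = Real.exp (lam * ((n : ℝ) - 1)) := by
    rw [Real.rpow_def_of_pos hp2, Real.log_pow, hcast]
    congr 1
    linear_combination ((n : ℝ) - 1) * hL2
  have hb : (n : ℝ) ^ (1 - α : ℝ) = n * (n : ℝ) ^ (-α) := by
    rw [show (1 - α : ℝ) = 1 + -α from by ring, Real.rpow_add hn0, Real.rpow_one]
  have hc : (n : ℝ) ^ (-α) * ((n - 1).factorial : ℝ) ^ (-α) = (n.factorial : ℝ) ^ (-α) := by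
    rw [← Real.mul_rpow hn0.le hF'.le]
    congr 1
    exact_mod_cast Nat.mul_factorial_pred (by omega)
  have hd : Real.exp (-lam * (n + 1)) * Real.exp (-(2 * lam) * ((n : ℝ) - 1)) *
      Real.exp (lam * ((n : ℝ) - 1)) = Real.exp (-(2 * lam) * n) := by
    rw [← Real.exp_add, ← Real.exp_add]
    congr 1
    ring
  simp only [B]
  rw [ha, hb, ← hc, ← hd]
  field_simp

lemma B_le_m (lam : ℝ) (hlam : 0 < lam) (hlam2 : lam ≤ Real.log 2) (n : ℕ) (hn : 1 ≤ n) :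
    B lam (lam / Real.log 2) n
      ≤ Real.exp (-lam * ((n : ℝ) * Nat.clog 2 n + n - 2 ^ Nat.clog 2 n)) := by
  have hL : 0 < Real.log 2 := Real.log_pos one_lt_two
  have hF : (0 : ℝ) < (n.factorial : ℝ) := by exact_mod_cast n.factorial_pos
  have hid : (n : ℝ) * Nat.clog 2 n - 2 ^ Nat.clog 2 n + 1
      = ∑ k ∈ Finset.Icc 1 n, (Nat.clog 2 k : ℝ) := by
    have h := sum_clog n
    have h2 : ((∑ k ∈ Finset.Icc 1 n, (Nat.clog 2 k : ℤ) : ℤ) : ℝ)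
        = ((n * Nat.clog 2 n - 2 ^ Nat.clog 2 n + 1 : ℤ) : ℝ) := by exact_mod_cast h
    push_cast at h2
    linarith
  have hsum : ∑ k ∈ Finset.Icc 1 n, (Nat.clog 2 k : ℝ)
      ≤ ∑ k ∈ Finset.Icc 1 n, (Real.log k / Real.log 2 + 1) :=
    Finset.sum_le_sum fun k hk => clog_le_log k (Finset.mem_Icc.mp hk).1
  have hsum2 : ∑ k ∈ Finset.Icc 1 n, (Real.log k / Real.log 2 + 1)
      = Real.log (n.factorial : ℝ) / Real.log 2 + n := by
    rw [Finset.sum_add_distrib, ← Finset.sum_div, ← log_factorial, Finset.sum_const,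
      Nat.card_Icc]
    simp
  have hM : (n : ℝ) * Nat.clog 2 n + n - 2 ^ Nat.clog 2 n
      ≤ 2 * n + Real.log (n.factorial : ℝ) / Real.log 2 := by
    have := hsum2 ▸ (hid ▸ hsum)
    linarith
  have hBe : B lam (lam / Real.log 2) n
      = Real.exp (-(2 * lam) * n + Real.log (n.factorial : ℝ) * (-(lam / Real.log 2))) := by
    rw [B, Real.rpow_def_of_pos hF, ← Real.exp_add]
  rw [hBe]
  apply Real.exp_le_exp.mpr
  have hmul := mul_le_mul_of_nonneg_left hM hlam.le
  have hdiv : lam * (Real.log (n.factorial : ℝ) / Real.log 2)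
      = Real.log (n.factorial : ℝ) * (lam / Real.log 2) := by ring
  nlinarith [hmul, hdiv]

theorem mergesort_score_ge_quicksort_score (lam : ℝ) (hlam : 0 < lam)
    (hlam2 : lam ≤ Real.log 2)
    (q : ℕ → ℝ) (hq0 : q 0 = 1)
    (hq : ∀ n : ℕ, 1 ≤ n → q n =
      Real.exp (-lam * (n + 1)) / n * ∑ k ∈ Finset.Icc 1 n, q (k - 1) * q (n - k))
    (m : ℕ → ℝ) (hm0 : m 0 = 1)
    (hm : ∀ n : ℕ, 1 ≤ n → m n =
      Real.exp (-lam * ((n : ℝ) * Nat.clog 2 n + n - 2 ^ Nat.clog 2 n))) :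
    ∀ n : ℕ, m n ≥ q n := by
  have hL : 0 < Real.log 2 := Real.log_pos one_lt_two
  have hα0 : 0 < lam / Real.log 2 := div_pos hlam hL
  have hα1 : lam / Real.log 2 ≤ 1 := (div_le_one hL).mpr hlam2
  have hαL : (lam / Real.log 2) * Real.log 2 = lam := div_mul_cancel₀ lam hL.ne'
  set α := lam / Real.log 2 with hαdef
  have main : ∀ n, 0 ≤ q n ∧ q n ≤ B lam α n := by
    intro n
    induction n using Nat.strong_induction_on with
    | _ n ih =>
      rcases Nat.eq_zero_or_pos n with rfl | hn
      · refine ⟨by rw [hq0]; norm_num, ?_⟩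
        rw [hq0]
        simp [B]
      · have hqn := hq n hn
        have hterm : ∀ k ∈ Finset.Icc 1 n, 0 ≤ q (k - 1) * q (n - k) ∧
            q (k - 1) * q (n - k) ≤ B lam α (k - 1) * B lam α (n - k) := by
          intro k hk
          obtain ⟨hk1, hkn⟩ := Finset.mem_Icc.mp hk
          obtain ⟨h1a, h1b⟩ := ih (k - 1) (by omega)
          obtain ⟨h2a, h2b⟩ := ih (n - k) (by omega)
          exact ⟨mul_nonneg h1a h2a, mul_le_mul h1b h2b h2a (B_pos lam α _).le⟩
        have hfac : 0 ≤ Real.exp (-lam * (n + 1)) / n := by positivity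
        refine ⟨?_, ?_⟩
        · rw [hqn]
          exact mul_nonneg hfac (Finset.sum_nonneg fun k hk => (hterm k hk).1)
        · rw [hqn]
          have hs1 : ∑ k ∈ Finset.Icc 1 n, q (k - 1) * q (n - k)
              ≤ ∑ k ∈ Finset.Icc 1 n, B lam α (k - 1) * B lam α (n - k) :=
            Finset.sum_le_sum fun k hk => (hterm k hk).2
          have hs2 : ∑ k ∈ Finset.Icc 1 n, B lam α (k - 1) * B lam α (n - k)
              = Real.exp (-(2 * lam) * ((n : ℝ) - 1)) * ((n - 1).factorial : ℝ) ^ (-α)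
                  * ∑ k ∈ Finset.Icc 1 n, (((n - 1).choose (k - 1) : ℝ)) ^ α := by
            rw [Finset.mul_sum]
            exact Finset.sum_congr rfl fun k hk => by
              obtain ⟨hk1, hkn⟩ := Finset.mem_Icc.mp hk
              exact B_mul lam α n k hk1 hkn
          have hs3 : ∑ k ∈ Finset.Icc 1 n, (((n - 1).choose (k - 1) : ℝ)) ^ α
              ≤ (n : ℝ) ^ (1 - α : ℝ) * ((2 : ℝ) ^ (n - 1 : ℕ)) ^ α := by
            have h := sum_rpow_le n hn α hα0 hα1
              (fun k => ((n - 1).choose (k - 1) : ℝ)) (fun k _ => by positivity)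
            rwa [sum_choose_Icc n hn] at h
          have hEF : 0 ≤ Real.exp (-(2 * lam) * ((n : ℝ) - 1)) *
              ((n - 1).factorial : ℝ) ^ (-α) := by positivity
          calc Real.exp (-lam * (n + 1)) / n *
                ∑ k ∈ Finset.Icc 1 n, q (k - 1) * q (n - k)
              ≤ Real.exp (-lam * (n + 1)) / n *
                ∑ k ∈ Finset.Icc 1 n, B lam α (k - 1) * B lam α (n - k) :=
                mul_le_mul_of_nonneg_left hs1 hfac
            _ = Real.exp (-lam * (n + 1)) / n *
                (Real.exp (-(2 * lam) * ((n : ℝ) - 1)) * ((n - 1).factorial : ℝ) ^ (-α)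
                  * ∑ k ∈ Finset.Icc 1 n, (((n - 1).choose (k - 1) : ℝ)) ^ α) := by
                rw [hs2]
            _ ≤ Real.exp (-lam * (n + 1)) / n *
                (Real.exp (-(2 * lam) * ((n : ℝ) - 1)) * ((n - 1).factorial : ℝ) ^ (-α)
                  * ((n : ℝ) ^ (1 - α : ℝ) * ((2 : ℝ) ^ (n - 1 : ℕ)) ^ α)) := by
                refine mul_le_mul_of_nonneg_left ?_ hfac
                rw [mul_assoc, mul_assoc]
                exact mul_le_mul_of_nonneg_left
                  (mul_le_mul_of_nonneg_left hs3 (by positivity)) (Real.exp_pos _).le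
            _ = B lam α n := B_final lam α hαL n hn
  intro n
  rcases Nat.eq_zero_or_pos n with rfl | hn
  · rw [hm0, hq0]
  · rw [ge_iff_le, hm n hn]
    exact le_trans (main n).2 (B_le_m lam hlam hlam2 n hn)
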